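/- Let Φ : ℝ → ℝ be three times continuously differentiable with concave–convex flux on an interval I: there is r* ∈ I with Φ'''(r) < 0 for all r ∈ I with r < r* and Φ'''(r) > 0 for all r ∈ I with r > r*. Then every off-diagonal conservative shock with data in I is subsonic: if a, b ∈ I, a ≠ b and J(a,b) = 0, then σ(a,b) < Φ''(a) and σ(a,b) < Φ''(b). -/

import Mathlib

/-- Conservative-shock function `J(a,b) = Φ(a) − Φ(b) − ((a−b)/2)·(Φ'(a) + Φ'(b))`. -/
noncomputable def consJ (Φ : ℝ → ℝ) (a b : ℝ) : ℝ :=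
  Φ a - Φ b - ((a - b) / 2) * (deriv Φ a + deriv Φ b)

/-- Rankine–Hugoniot (secant) slope `σ(a,b) = (Φ'(a) − Φ'(b))/(a − b)`. -/
noncomputable def rhSlope (Φ : ℝ → ℝ) (a b : ℝ) : ℝ :=
  (deriv Φ a - deriv Φ b) / (a - b)

private lemma mono_aux {F D : ℝ → ℝ} (hF : ∀ t, HasDerivAt F (D t) t) {c d : ℝ}
    (hpos : ∀ x ∈ Set.Ioo c d, 0 < D x) : StrictMonoOn F (Set.Icc c d) := by
  apply strictMonoOn_of_deriv_pos (convex_Icc c d)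
    (fun t _ => (hF t).differentiableAt.continuousAt.continuousWithinAt)
  intro x hx
  rw [interior_Icc] at hx
  rw [(hF x).deriv]
  exact hpos x hx

private lemma anti_aux {F D : ℝ → ℝ} (hF : ∀ t, HasDerivAt F (D t) t) {c d : ℝ}
    (hneg : ∀ x ∈ Set.Ioo c d, D x < 0) : StrictAntiOn F (Set.Icc c d) := by
  apply strictAntiOn_of_deriv_neg (convex_Icc c d)
    (fun t _ => (hF t).differentiableAt.continuousAt.continuousWithinAt)
  intro x hx
  rw [interior_Icc] at hx
  rw [(hF x).deriv]
  exact hneg x hx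

private lemma key (Φ : ℝ → ℝ) (hΦ : ContDiff ℝ 3 Φ)
    (I : Set ℝ) (hI : I.OrdConnected) (rs : ℝ)
    (h1 : ∀ r ∈ I, r < rs → iteratedDeriv 3 Φ r < 0)
    (h2 : ∀ r ∈ I, rs < r → 0 < iteratedDeriv 3 Φ r)
    (a b : ℝ) (ha : a ∈ I) (hb : b ∈ I) (hba : b < a) (hJ : consJ Φ a b = 0) :
    rhSlope Φ a b < iteratedDeriv 2 Φ a ∧ rhSlope Φ a b < iteratedDeriv 2 Φ b := by
  -- smoothness facts
  rw [show (3 : WithTop ℕ∞) = 2 + 1 by norm_num, contDiff_succ_iff_deriv] at hΦ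
  have hd1 : Differentiable ℝ Φ := hΦ.1
  have hc2 : ContDiff ℝ 2 (deriv Φ) := hΦ.2.2
  have hd2 : Differentiable ℝ (deriv Φ) := hc2.differentiable (by norm_num)
  rw [show (2 : WithTop ℕ∞) = 1 + 1 by norm_num, contDiff_succ_iff_deriv] at hc2
  have hd3 : Differentiable ℝ (deriv (deriv Φ)) := hc2.2.2.differentiable (by norm_num)
  have e3 : iteratedDeriv 3 Φ = deriv (deriv (deriv Φ)) := by
    simp [show (3:ℕ)=2+1 from rfl, show (2:ℕ)=1+1 from rfl, iteratedDeriv_succ,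
      iteratedDeriv_one]
  have e2 : iteratedDeriv 2 Φ = deriv (deriv Φ) := by
    simp [show (2:ℕ)=1+1 from rfl, iteratedDeriv_succ, iteratedDeriv_one]
  rw [e3] at h1 h2
  have hIcc : Set.Icc b a ⊆ I := hI.out hb ha
  -- auxiliary functions
  obtain ⟨G, hGdef⟩ : ∃ G : ℝ → ℝ,
      G = fun t => deriv Φ t - deriv Φ b - (t - b) * deriv (deriv Φ) t := ⟨_, rfl⟩
  obtain ⟨H, hHdef⟩ : ∃ H : ℝ → ℝ,
      H = fun t => deriv Φ a - deriv Φ t - (a - t) * deriv (deriv Φ) t := ⟨_, rfl⟩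
  have hGd : ∀ t, HasDerivAt G (-(t - b) * deriv (deriv (deriv Φ)) t) t := by
    intro t
    rw [hGdef]
    have := ((hd2 t).hasDerivAt.sub_const (deriv Φ b)).sub
      (((hasDerivAt_id t).sub_const b).mul (hd3 t).hasDerivAt)
    refine this.congr_deriv ?_
    simp only [id_eq]
    ring
  have hHd : ∀ t, HasDerivAt H (-(a - t) * deriv (deriv (deriv Φ)) t) t := by
    intro t
    rw [hHdef]
    have := ((hasDerivAt_const t (deriv Φ a)).sub (hd2 t).hasDerivAt).sub
      (((hasDerivAt_id t).const_sub a).mul (hd3 t).hasDerivAt)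
    refine this.congr_deriv ?_
    simp only [id_eq]
    ring
  have hFd : ∀ t, HasDerivAt (fun s => consJ Φ s b) (G t / 2) t := by
    intro t
    have := ((hd1 t).hasDerivAt.sub_const (Φ b)).sub
      ((((hasDerivAt_id t).sub_const b).div_const 2).mul
        ((hd2 t).hasDerivAt.add_const (deriv Φ b)))
    have e : G t / 2 = deriv Φ t - (1 / 2 * (deriv Φ t + deriv Φ b)
        + (t - b) / 2 * deriv (deriv Φ) t) := by rw [hGdef]; ring
    rw [e]
    exact this
  have hKd : ∀ t, HasDerivAt (fun s => consJ Φ a s) (H t / 2) t := by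
    intro t
    have := ((hasDerivAt_const t (Φ a)).sub (hd1 t).hasDerivAt).sub
      ((((hasDerivAt_id t).const_sub a).div_const 2).mul
        ((hd2 t).hasDerivAt.const_add (deriv Φ a)))
    have e : H t / 2 = 0 - deriv Φ t - (-1 / 2 * (deriv Φ a + deriv Φ t)
        + (a - t) / 2 * deriv (deriv Φ) t) := by rw [hHdef]; ring
    rw [e]
    exact this
  have hG0 : G b = 0 := by simp [hGdef]
  have hH0 : H a = 0 := by simp [hHdef]
  have hJbb : consJ Φ b b = 0 := by simp [consJ]
  have hJaa : consJ Φ a a = 0 := by simp [consJ]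
  -- the sonic point is strictly between b and a
  have hbrs : b < rs := by
    by_contra hcon
    push_neg at hcon
    have hGanti : StrictAntiOn G (Set.Icc b a) := by
      refine anti_aux hGd fun x hx => ?_
      have hf3 : 0 < deriv (deriv (deriv Φ)) x :=
        h2 x (hIcc ⟨hx.1.le, hx.2.le⟩) (lt_of_le_of_lt hcon hx.1)
      nlinarith [hx.1]
    have hFanti : StrictAntiOn (fun s => consJ Φ s b) (Set.Icc b a) := by
      refine anti_aux hFd fun x hx => ?_
      have := hGanti ⟨le_rfl, hba.le⟩ ⟨hx.1.le, hx.2.le⟩ hx.1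
      rw [hG0] at this
      linarith
    have := hFanti ⟨le_rfl, hba.le⟩ ⟨hba.le, le_rfl⟩ hba
    simp only [hJbb, hJ] at this
    exact lt_irrefl 0 this
  have hrsa : rs < a := by
    by_contra hcon
    push_neg at hcon
    have hGmono : StrictMonoOn G (Set.Icc b a) := by
      refine mono_aux hGd fun x hx => ?_
      have hf3 : deriv (deriv (deriv Φ)) x < 0 :=
        h1 x (hIcc ⟨hx.1.le, hx.2.le⟩) (lt_of_lt_of_le hx.2 hcon)
      nlinarith [hx.1]
    have hFmono : StrictMonoOn (fun s => consJ Φ s b) (Set.Icc b a) := by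
      refine mono_aux hFd fun x hx => ?_
      have := hGmono ⟨le_rfl, hba.le⟩ ⟨hx.1.le, hx.2.le⟩ hx.1
      rw [hG0] at this
      linarith
    have := hFmono ⟨le_rfl, hba.le⟩ ⟨hba.le, le_rfl⟩ hba
    simp only [hJbb, hJ] at this
    exact lt_irrefl 0 this
  -- first inequality, in the form `G a < 0`
  have hGa : G a < 0 := by
    by_contra hcon
    push_neg at hcon
    have hm1 : StrictMonoOn G (Set.Icc b rs) := by
      refine mono_aux hGd fun x hx => ?_
      have hf3 : deriv (deriv (deriv Φ)) x < 0 :=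
        h1 x (hIcc ⟨hx.1.le, hx.2.le.trans hrsa.le⟩) hx.2
      nlinarith [hx.1]
    have hm2 : StrictAntiOn G (Set.Icc rs a) := by
      refine anti_aux hGd fun x hx => ?_
      have hf3 : 0 < deriv (deriv (deriv Φ)) x :=
        h2 x (hIcc ⟨hbrs.le.trans hx.1.le, hx.2.le⟩) hx.1
      nlinarith [lt_trans hbrs hx.1]
    have hGpos : ∀ x ∈ Set.Ioo b a, 0 < G x := by
      intro x hx
      rcases le_or_gt x rs with hxr | hxr
      · have := hm1 ⟨le_rfl, hbrs.le⟩ ⟨hx.1.le, hxr⟩ hx.1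
        rw [hG0] at this
        exact this
      · have := hm2 ⟨hxr.le, hx.2.le⟩ ⟨hrsa.le, le_rfl⟩ hx.2
        linarith
    have hFmono : StrictMonoOn (fun s => consJ Φ s b) (Set.Icc b a) := by
      refine mono_aux hFd fun x hx => ?_
      have := hGpos x hx
      linarith
    have := hFmono ⟨le_rfl, hba.le⟩ ⟨hba.le, le_rfl⟩ hba
    simp only [hJbb, hJ] at this
    exact lt_irrefl 0 this
  -- second inequality, in the form `H b < 0`
  have hHb : H b < 0 := by
    by_contra hcon
    push_neg at hcon
    have hm1 : StrictMonoOn H (Set.Icc b rs) := by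
      refine mono_aux hHd fun x hx => ?_
      have hf3 : deriv (deriv (deriv Φ)) x < 0 :=
        h1 x (hIcc ⟨hx.1.le, hx.2.le.trans hrsa.le⟩) hx.2
      nlinarith [lt_trans hx.2 hrsa]
    have hm2 : StrictAntiOn H (Set.Icc rs a) := by
      refine anti_aux hHd fun x hx => ?_
      have hf3 : 0 < deriv (deriv (deriv Φ)) x :=
        h2 x (hIcc ⟨hbrs.le.trans hx.1.le, hx.2.le⟩) hx.1
      nlinarith [hx.2]
    have hHpos : ∀ x ∈ Set.Ioo b a, 0 < H x := by
      intro x hx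
      rcases le_or_gt x rs with hxr | hxr
      · have := hm1 ⟨le_rfl, hbrs.le⟩ ⟨hx.1.le, hxr⟩ hx.1
        linarith
      · have := hm2 ⟨hxr.le, hx.2.le⟩ ⟨hrsa.le, le_rfl⟩ hx.2
        rw [hH0] at this
        linarith
    have hKmono : StrictMonoOn (fun s => consJ Φ a s) (Set.Icc b a) := by
      refine mono_aux hKd fun x hx => ?_
      have := hHpos x hx
      linarith
    have := hKmono ⟨le_rfl, hba.le⟩ ⟨hba.le, le_rfl⟩ hba
    simp only [hJaa, hJ] at this
    exact lt_irrefl 0 this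
  rw [hGdef] at hGa
  rw [hHdef] at hHb
  simp only at hGa hHb
  constructor
  · rw [e2, rhSlope, div_lt_iff₀ (sub_pos.mpr hba)]
    nlinarith
  · rw [e2, rhSlope, div_lt_iff₀ (sub_pos.mpr hba)]
    nlinarith

theorem stmt18 (Φ : ℝ → ℝ) (hΦ : ContDiff ℝ 3 Φ)
    (I : Set ℝ) (hI : I.OrdConnected) (rs : ℝ) (hrs : rs ∈ I)
    (h1 : ∀ r ∈ I, r < rs → iteratedDeriv 3 Φ r < 0)
    (h2 : ∀ r ∈ I, rs < r → 0 < iteratedDeriv 3 Φ r)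
    (a b : ℝ) (ha : a ∈ I) (hb : b ∈ I) (hab : a ≠ b) (hJ : consJ Φ a b = 0) :
    rhSlope Φ a b < iteratedDeriv 2 Φ a ∧ rhSlope Φ a b < iteratedDeriv 2 Φ b := by
  rcases hab.lt_or_gt with h | h
  · have hJ' : consJ Φ b a = 0 := by
      simp only [consJ] at hJ ⊢
      linear_combination -hJ
    have hrh : rhSlope Φ b a = rhSlope Φ a b := by
      rw [rhSlope, rhSlope, ← neg_div_neg_eq]
      ring_nf
    obtain ⟨hA, hB⟩ := key Φ hΦ I hI rs h1 h2 b a hb ha h hJ'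
    rw [hrh] at hA hB
    exact ⟨hB, hA⟩
  · exact key Φ hΦ I hI rs h1 h2 a b ha hb h hJ
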